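/- arXiv:2008.10373 — 2 statements merged into one kernel-verified Lean document; each statement's English description precedes it below -/
import Mathlib

section
/- The ILP gadget correctly excludes strictly monotone cycles: let (l_e)_{e∈E(C)} be integers with |l_e| ≤ m, let M > m·|E(C)|, and let z, (x_e), (y_e) be 0/1 variables satisfying Σ l_e ≤ M(1−z), Σ l_e ≥ −M(1−z), Σ x_e + z ≥ 1, Σ y_e + z ≥ 1, l_e ≤ −1 + M(1−x_e) and l_e ≥ 1 − M(1−y_e) for all e. Then either Σ_{e} l_e = 0 and z = 1, or there exist e⁻ with l_{e⁻} ≤ −1 and e⁺ with l_{e⁺} ≥ 1. In particular, the labels (l_e) are not strictly monotone (not all of one strict sign with nonzero sum). -/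
open Finset

/-- The ILP gadget correctly excludes strictly monotone cycles: let
`(l_e)` be integers with `|l_e| ≤ m`, let `M > m · |E(C)|`, and let `z, (x_e), (y_e)` be
0/1 variables satisfying the six families of constraints.  Then either `∑ l_e = 0` and
`z = 1`, or there exist `e⁻` with `l_{e⁻} ≤ -1` and `e⁺` with `l_{e⁺} ≥ 1`.  In
particular, the labels are not strictly monotone (not all of one strict sign with
nonzero sum). -/
theorem ilp_gadget_excludes_monotone
    {E : Type*} [Fintype E] [Nonempty E]
    (m M : ℤ) (hm : 1 ≤ m) (hM : m * (Fintype.card E : ℤ) < M)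
    (l x y : E → ℤ) (z : ℤ)
    (hl : ∀ e, |l e| ≤ m)
    (hz : z = 0 ∨ z = 1)
    (hx : ∀ e, x e = 0 ∨ x e = 1)
    (hy : ∀ e, y e = 0 ∨ y e = 1)
    (c1 : ∑ e, l e ≤ M * (1 - z))
    (c2 : -(M * (1 - z)) ≤ ∑ e, l e)
    (c3 : 1 ≤ (∑ e, x e) + z)
    (c4 : 1 ≤ (∑ e, y e) + z)
    (c5 : ∀ e, l e ≤ -1 + M * (1 - x e))
    (c6 : ∀ e, 1 - M * (1 - y e) ≤ l e) :
    (((∑ e, l e) = 0 ∧ z = 1) ∨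
      ((∃ em, l em ≤ -1) ∧ (∃ ep, 1 ≤ l ep))) ∧
    ¬((∑ e, l e) ≠ 0 ∧ ¬((∃ em, l em < 0) ∧ (∃ ep, 0 < l ep))) := by
  rcases hz with hz | hz
  · -- z = 0
    subst hz
    simp only [add_zero] at c3 c4
    have hxe : ∃ e, x e = 1 := by
      by_contra h
      push_neg at h
      have : ∑ e, x e = 0 := Finset.sum_eq_zero fun e _ => by
        rcases hx e with h0 | h1
        · exact h0
        · exact absurd h1 (h e)
      omega
    have hye : ∃ e, y e = 1 := by
      by_contra h
      push_neg at h
      have : ∑ e, y e = 0 := Finset.sum_eq_zero fun e _ => by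
        rcases hy e with h0 | h1
        · exact h0
        · exact absurd h1 (h e)
      omega
    obtain ⟨em, hem⟩ := hxe
    obtain ⟨ep, hep⟩ := hye
    have h5 := c5 em
    have h6 := c6 ep
    rw [hem] at h5
    rw [hep] at h6
    simp at h5 h6
    constructor
    · exact Or.inr ⟨⟨em, by omega⟩, ⟨ep, by omega⟩⟩
    · rintro ⟨_, h⟩
      exact h ⟨⟨em, by omega⟩, ⟨ep, by omega⟩⟩
  · -- z = 1
    subst hz
    simp only [sub_self, mul_zero] at c1 c2
    have hsum : ∑ e, l e = 0 := le_antisymm c1 (by omega)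
    exact ⟨Or.inl ⟨hsum, rfl⟩, fun h => h.1 hsum⟩
end

section
/- Conversely, the ILP gadget is always satisfiable for non-strictly-monotone label vectors: if integers (l_e)_{e∈E(C)} with |l_e| ≤ m satisfy either (a) l_e = 0 for all e, or (b) there exist e⁻, e⁺ with l_{e⁻} < 0 < l_{e⁺}, then there exist 0/1 values z, (x_e), (y_e) satisfying all six families of constraints with M > m·|E(C)|. -/
open Finset

/-- Conversely, the ILP gadget is always satisfiable for
non-strictly-monotone label vectors: if integers `(l_e)` with `|l_e| ≤ m` satisfy either
(a) `l_e = 0` for all `e`, or (b) there exist `e⁻, e⁺` with `l_{e⁻} < 0 < l_{e⁺}`, then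
there exist 0/1 values `z, (x_e), (y_e)` satisfying all six families of constraints,
with `M > m · |E(C)|`. -/
theorem ilp_gadget_satisfiable
    {E : Type*} [Fintype E] [Nonempty E] [DecidableEq E]
    (m M : ℤ) (hm : 1 ≤ m) (hM : m * (Fintype.card E : ℤ) < M)
    (l : E → ℤ) (hl : ∀ e, |l e| ≤ m)
    (h : (∀ e, l e = 0) ∨ (∃ em ep, l em < 0 ∧ 0 < l ep)) :
    ∃ (z : ℤ) (x y : E → ℤ),
      (z = 0 ∨ z = 1) ∧
      (∀ e, x e = 0 ∨ x e = 1) ∧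
      (∀ e, y e = 0 ∨ y e = 1) ∧
      (∑ e, l e ≤ M * (1 - z)) ∧
      (-(M * (1 - z)) ≤ ∑ e, l e) ∧
      (1 ≤ (∑ e, x e) + z) ∧
      (1 ≤ (∑ e, y e) + z) ∧
      (∀ e, l e ≤ -1 + M * (1 - x e)) ∧
      (∀ e, 1 - M * (1 - y e) ≤ l e) := by
  have hcard : (1 : ℤ) ≤ (Fintype.card E : ℤ) := by
    exact_mod_cast Fintype.card_pos
  have hmM : m < M := lt_of_le_of_lt (le_mul_of_one_le_right (by linarith) hcard) hM
  rcases h with h | ⟨em, ep, hem, hep⟩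
  · refine ⟨1, fun _ => 0, fun _ => 0, Or.inr rfl, fun _ => Or.inl rfl, fun _ => Or.inl rfl,
      ?_, ?_, ?_, ?_, ?_, ?_⟩
    · simp [h]
    · simp [h]
    · simp
    · simp
    · intro e; rw [h e]; simp; linarith
    · intro e; rw [h e]; simp; linarith
  · have hsum : |∑ e, l e| ≤ m * (Fintype.card E : ℤ) := by
      calc |∑ e, l e| ≤ ∑ e, |l e| := Finset.abs_sum_le_sum_abs _ _
        _ ≤ ∑ _e : E, m := Finset.sum_le_sum fun e _ => hl e
        _ = m * (Fintype.card E : ℤ) := by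
            rw [Finset.sum_const, Finset.card_univ, nsmul_eq_mul, mul_comm]
    have h1 := abs_le.mp hsum
    refine ⟨0, fun e => if e = em then 1 else 0, fun e => if e = ep then 1 else 0,
      Or.inl rfl, fun e => by by_cases he : e = em <;> simp [he],
      fun e => by by_cases he : e = ep <;> simp [he], ?_, ?_, ?_, ?_, ?_, ?_⟩
    · linarith [h1.2]
    · linarith [h1.1]
    · rw [Finset.sum_ite_eq' Finset.univ em]; simp
    · rw [Finset.sum_ite_eq' Finset.univ ep]; simp
    · intro e
      by_cases he : e = em
      · subst he; simp; linarith
      · simp [he]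
        have := (abs_le.mp (hl e)).2
        linarith
    · intro e
      by_cases he : e = ep
      · subst he; simp; linarith
      · simp [he]
        have := (abs_le.mp (hl e)).1
        linarith
end
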